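/- Let W, W' ⊆ ℂ^(2n) be complex Lagrangian subspaces such that the Hermitian form h is positive definite on W and on W' (i.e. h(v,v) > 0 for all nonzero v in W, respectively W'). Then there exists a 2n×2n matrix g with real entries satisfying ω_ℂ(g·v, g·w) = ω_ℂ(v,w) for all v,w ∈ ℂ^(2n) such that g(W) = W'. In other words, the real symplectic group Sp(2n,ℝ) acts transitively on the set H_{n,0} of complex Lagrangians on which h is positive definite. -/

import Mathlib

open Complex

abbrev Vc (n : ℕ) : Type := Fin n ⊕ Fin n → ℂ

noncomputable def omegaC (n : ℕ) (v w : Vc n) : ℂ :=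
  ∑ k : Fin n, (v (Sum.inl k) * w (Sum.inr k) - v (Sum.inr k) * w (Sum.inl k))

def sigmaC (n : ℕ) (v : Vc n) : Vc n := fun k => starRingEnd ℂ (v k)

noncomputable def hC (n : ℕ) (v w : Vc n) : ℂ := Complex.I * omegaC n (sigmaC n v) w
noncomputable def matAct (n : ℕ) (g : Matrix (Fin n ⊕ Fin n) (Fin n ⊕ Fin n) ℝ) :
    Vc n →ₗ[ℂ] Vc n :=
  Matrix.mulVecLin (g.map (algebraMap ℝ ℂ))

open Matrix

/-! ### Bilinearity and conjugation lemmas for `omegaC` -/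

lemma omega_add_left (n : ℕ) (u v w : Vc n) :
    omegaC n (u + v) w = omegaC n u w + omegaC n v w := by
  simp only [omegaC, Pi.add_apply]
  rw [← Finset.sum_add_distrib]
  exact Finset.sum_congr rfl fun _ _ => by ring

lemma omega_add_right (n : ℕ) (u v w : Vc n) :
    omegaC n u (v + w) = omegaC n u v + omegaC n u w := by
  simp only [omegaC, Pi.add_apply]
  rw [← Finset.sum_add_distrib]
  exact Finset.sum_congr rfl fun _ _ => by ring

lemma omega_smul_left (n : ℕ) (c : ℂ) (v w : Vc n) :
    omegaC n (c • v) w = c * omegaC n v w := by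
  simp only [omegaC, Pi.smul_apply, smul_eq_mul, Finset.mul_sum]
  exact Finset.sum_congr rfl fun _ _ => by ring

lemma omega_smul_right (n : ℕ) (c : ℂ) (v w : Vc n) :
    omegaC n v (c • w) = c * omegaC n v w := by
  simp only [omegaC, Pi.smul_apply, smul_eq_mul, Finset.mul_sum]
  exact Finset.sum_congr rfl fun _ _ => by ring

lemma conj_omega (n : ℕ) (v w : Vc n) :
    starRingEnd ℂ (omegaC n v w) = omegaC n (sigmaC n v) (sigmaC n w) := by
  simp [omegaC, sigmaC, map_sum, map_sub, _root_.map_mul]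

lemma omega_antisymm (n : ℕ) (v w : Vc n) : omegaC n v w = -omegaC n w v := by
  simp only [omegaC, ← Finset.sum_neg_distrib]
  exact Finset.sum_congr rfl fun _ _ => by ring

lemma sigma_sigma (n : ℕ) (v : Vc n) : sigmaC n (sigmaC n v) = v := by
  funext a; simp [sigmaC]

lemma sigma_add (n : ℕ) (v w : Vc n) : sigmaC n (v + w) = sigmaC n v + sigmaC n w := by
  funext a; simp [sigmaC]

lemma sigma_smul (n : ℕ) (c : ℂ) (v : Vc n) :
    sigmaC n (c • v) = (starRingEnd ℂ c) • sigmaC n v := by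
  funext a; simp [sigmaC]

lemma hC_conj_symm (n : ℕ) (v w : Vc n) : starRingEnd ℂ (hC n w v) = hC n v w := by
  simp only [hC, _root_.map_mul, Complex.conj_I, conj_omega, sigma_sigma]
  rw [omega_antisymm]
  ring

lemma hC_zero (n : ℕ) (w : Vc n) : hC n 0 w = 0 := by
  simp [hC, omegaC, sigmaC]

/-! ### The matrix `J` and symplectic matrices -/

noncomputable def Jc (n : ℕ) : Matrix (Fin n ⊕ Fin n) (Fin n ⊕ Fin n) ℂ :=
  Matrix.of fun a b =>
    match a, b with
    | Sum.inl k, Sum.inr l => if k = l then 1 else 0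
    | Sum.inr k, Sum.inl l => if k = l then -1 else 0
    | _, _ => 0

noncomputable def Jr (n : ℕ) : Matrix (Fin n ⊕ Fin n) (Fin n ⊕ Fin n) ℝ :=
  Matrix.of fun a b =>
    match a, b with
    | Sum.inl k, Sum.inr l => if k = l then 1 else 0
    | Sum.inr k, Sum.inl l => if k = l then -1 else 0
    | _, _ => 0

lemma Jr_map (n : ℕ) : (Jr n).map (algebraMap ℝ ℂ) = Jc n := by
  ext a b
  cases a <;> cases b <;> simp [Jr, Jc, Matrix.map_apply, apply_ite]

lemma omega_eq_dot (n : ℕ) (v w : Vc n) :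
    omegaC n v w = dotProduct v ((Jc n).mulVec w) := by
  simp only [omegaC, dotProduct, Matrix.mulVec, Fintype.sum_sum_type, Jc, Matrix.of_apply]
  simp [Finset.mul_sum, Finset.sum_sub_distrib, mul_ite, Finset.sum_ite_eq, sub_eq_add_neg,
    Finset.sum_add_distrib, Finset.sum_neg_distrib]

lemma Jc_mul_Jc (n : ℕ) : Jc n * Jc n = -1 := by
  ext a b
  cases a <;> cases b <;>
    simp [Jc, Matrix.mul_apply, Fintype.sum_sum_type, Matrix.one_apply, ite_and,
      Finset.sum_ite_eq, Finset.sum_ite_eq', apply_ite, eq_comm]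

lemma entry_eq_omega (n : ℕ) (M : Matrix (Fin n ⊕ Fin n) (Fin n ⊕ Fin n) ℂ)
    (a b : Fin n ⊕ Fin n) :
    (Mᵀ * Jc n * M) a b = omegaC n (fun c => M c a) (fun c => M c b) := by
  rw [omega_eq_dot]
  simp only [Matrix.mul_apply, dotProduct, Matrix.mulVec, Matrix.transpose_apply,
    Finset.sum_mul, Finset.mul_sum]
  rw [Finset.sum_comm]
  exact Finset.sum_congr rfl fun c _ => Finset.sum_congr rfl fun d _ => by ring

lemma sympl_of_mat (n : ℕ) (M : Matrix (Fin n ⊕ Fin n) (Fin n ⊕ Fin n) ℂ)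
    (h : Mᵀ * Jc n * M = Jc n) (v w : Vc n) :
    omegaC n (M.mulVec v) (M.mulVec w) = omegaC n v w := by
  rw [omega_eq_dot, omega_eq_dot, Matrix.mulVec_mulVec, Matrix.dotProduct_mulVec,
    ← Matrix.vecMul_transpose, Matrix.vecMul_vecMul, ← Matrix.mul_assoc, h,
    ← Matrix.dotProduct_mulVec]

lemma leftinv (n : ℕ) (M : Matrix (Fin n ⊕ Fin n) (Fin n ⊕ Fin n) ℂ)
    (h : Mᵀ * Jc n * M = Jc n) : (-(Jc n) * Mᵀ * Jc n) * M = 1 := by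
  calc (-(Jc n) * Mᵀ * Jc n) * M = (-(Jc n)) * (Mᵀ * Jc n * M) := by
        rw [Matrix.mul_assoc, Matrix.mul_assoc, Matrix.mul_assoc]
    _ = (-(Jc n)) * Jc n := by rw [h]
    _ = 1 := by rw [neg_mul, Jc_mul_Jc]; simp

/-! ### Positive-definite inner product structure on a positive Lagrangian -/

noncomputable def posCore (n : ℕ) (W : Submodule ℂ (Vc n))
    (hWpos : ∀ v ∈ W, v ≠ 0 → 0 < (hC n v v).re ∧ (hC n v v).im = 0) :
    InnerProductSpace.Core ℂ W where
  inner v w := hC n v w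
  conj_inner_symm v w := hC_conj_symm n _ _
  re_inner_nonneg x := by
    by_cases hx : (x : Vc n) = 0
    · simp [hx, hC_zero]
    · exact le_of_lt (hWpos x x.2 hx).1
  definite x hx := by
    by_contra h
    have hx0 : (x : Vc n) ≠ 0 := fun h0 => h (Subtype.ext h0)
    have := (hWpos x x.2 hx0).1
    rw [show hC n (x : Vc n) x = 0 from hx] at this
    simp at this
  add_left x y z := by
    show hC n (↑x + ↑y) z = hC n x z + hC n y z
    simp only [hC, sigma_add, omega_add_left]; ring
  smul_left x y c := by
    show hC n (c • (x : Vc n)) y = starRingEnd ℂ c * hC n x y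
    simp only [hC, sigma_smul, omega_smul_left]; ring

lemma exists_orthonormal_basis (n : ℕ) (W : Submodule ℂ (Vc n))
    (hWdim : Module.finrank ℂ W = n)
    (hWpos : ∀ v ∈ W, v ≠ 0 → 0 < (hC n v v).re ∧ (hC n v v).im = 0) :
    ∃ w : Fin n → Vc n, (∀ i, w i ∈ W)
      ∧ (∀ i j, hC n (w i) (w j) = if i = j then 1 else 0)
      ∧ Submodule.span ℂ (Set.range w) = W := by
  letI c := posCore n W hWpos
  letI nacg : NormedAddCommGroup ↥W := c.toNormedAddCommGroup
  letI ips : @InnerProductSpace ℂ ↥W _ nacg.toSeminormedAddCommGroup :=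
    @InnerProductSpace.ofCore ℂ ↥W _ _ _ c.toCore
  haveI fd : FiniteDimensional ℂ ↥W := inferInstance
  let b := (@stdOrthonormalBasis ℂ _ ↥W nacg ips fd).reindex (finCongr hWdim)
  have hb := b.orthonormal
  rw [@orthonormal_iff_ite ℂ ↥W _ nacg.toSeminormedAddCommGroup ips _ _ _] at hb
  refine ⟨fun i => (b i : Vc n), fun i => (b i).2, fun i j => ?_, ?_⟩
  · have := hb i j
    have hinner : (inner ℂ (b i) (b j) : ℂ) = hC n (b i : Vc n) (b j : Vc n) := rfl
    rw [hinner] at this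
    exact this
  · have h1 : Submodule.span ℂ (Set.range ⇑b.toBasis) = ⊤ := b.toBasis.span_eq
    have h2 := congrArg (Submodule.map W.subtype) h1
    rw [Submodule.map_span, Submodule.map_subtype_top] at h2
    have h3 : ⇑W.subtype '' Set.range ⇑b.toBasis = Set.range fun i => ((b i : Vc n)) := by
      rw [← Set.range_comp]
      simp only [OrthonormalBasis.coe_toBasis]
      rfl
    rw [h3] at h2
    exact h2

/-! ### Real and imaginary parts of an orthonormal basis -/

section rel
variable (n : ℕ) (w : Fin n → Vc n)

noncomputable def Xr (i : Fin n) : Vc n := fun a => ((w i a).re : ℂ)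
noncomputable def Yr (i : Fin n) : Vc n := fun a => ((w i a).im : ℂ)

lemma w_decomp (i : Fin n) : w i = Xr n w i + Complex.I • Yr n w i := by
  funext a
  simp only [Xr, Yr, Pi.add_apply, Pi.smul_apply, smul_eq_mul]
  rw [mul_comm, Complex.re_add_im]

lemma sigma_Xr (i : Fin n) : sigmaC n (Xr n w i) = Xr n w i := by
  funext a; simp [sigmaC, Xr]
lemma sigma_Yr (i : Fin n) : sigmaC n (Yr n w i) = Yr n w i := by
  funext a; simp [sigmaC, Yr]

lemma sigma_w (i : Fin n) : sigmaC n (w i) = Xr n w i + (-Complex.I) • Yr n w i := by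
  conv_lhs => rw [w_decomp n w i]
  rw [sigma_add, sigma_smul, sigma_Xr, sigma_Yr, Complex.conj_I]

lemma real_omega (u v : Vc n) (hu : sigmaC n u = u) (hv : sigmaC n v = v) :
    (omegaC n u v).im = 0 := by
  have : starRingEnd ℂ (omegaC n u v) = omegaC n u v := by rw [conj_omega, hu, hv]
  rw [Complex.conj_eq_iff_im] at this
  exact this

lemma complex_solve (A B C D δ : ℂ)
    (hA : A.im = 0) (hB : B.im = 0) (hC : C.im = 0) (hD : D.im = 0) (hδ : δ.im = 0)
    (e1 : A - D + Complex.I * (B + C) = 0)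
    (e2 : Complex.I * (A + D) + (C - B) = δ) :
    A = 0 ∧ D = 0 ∧ B = -δ / 2 ∧ C = δ / 2 := by
  have e1re := congrArg Complex.re e1
  have e1im := congrArg Complex.im e1
  have e2re := congrArg Complex.re e2
  have e2im := congrArg Complex.im e2
  simp [Complex.add_re, Complex.add_im, Complex.sub_re, Complex.sub_im, Complex.mul_re,
    Complex.mul_im, Complex.I_re, Complex.I_im, hA, hB, hC, hD] at e1re e1im e2re e2im
  refine ⟨?_, ?_, ?_, ?_⟩ <;>
  · apply Complex.ext <;>
      simp [Complex.div_re, Complex.div_im, Complex.neg_re, Complex.neg_im, hA, hB, hC, hD, hδ,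
        Complex.ofReal_re] <;>
      nlinarith [e1re, e1im, e2re, e2im]

lemma key_relations
    (hIso : ∀ i j, omegaC n (w i) (w j) = 0)
    (hOrth : ∀ i j, hC n (w i) (w j) = if i = j then 1 else 0) (i j : Fin n) :
    omegaC n (Xr n w i) (Xr n w j) = 0 ∧
    omegaC n (Yr n w i) (Yr n w j) = 0 ∧
    omegaC n (Xr n w i) (Yr n w j) = -(if i = j then 1 else 0) / 2 ∧
    omegaC n (Yr n w i) (Xr n w j) = (if i = j then 1 else 0) / 2 := by
  have hA := real_omega n (Xr n w i) (Xr n w j) (sigma_Xr n w i) (sigma_Xr n w j)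
  have hB := real_omega n (Xr n w i) (Yr n w j) (sigma_Xr n w i) (sigma_Yr n w j)
  have hC2 := real_omega n (Yr n w i) (Xr n w j) (sigma_Yr n w i) (sigma_Xr n w j)
  have hD := real_omega n (Yr n w i) (Yr n w j) (sigma_Yr n w i) (sigma_Yr n w j)
  have hδ : (if i = j then (1:ℂ) else 0).im = 0 := by split <;> simp
  have e1 : omegaC n (Xr n w i) (Xr n w j) - omegaC n (Yr n w i) (Yr n w j)
      + Complex.I * (omegaC n (Xr n w i) (Yr n w j) + omegaC n (Yr n w i) (Xr n w j)) = 0 := by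
    have h0 := hIso i j
    rw [w_decomp n w i, w_decomp n w j] at h0
    simp only [omega_add_left, omega_add_right, omega_smul_left, omega_smul_right] at h0
    linear_combination h0 - omegaC n (Yr n w i) (Yr n w j) * Complex.I_mul_I
  have e2 : Complex.I * (omegaC n (Xr n w i) (Xr n w j) + omegaC n (Yr n w i) (Yr n w j))
      + (omegaC n (Yr n w i) (Xr n w j) - omegaC n (Xr n w i) (Yr n w j))
      = (if i = j then 1 else 0) := by
    have h0 := hOrth i j
    unfold hC at h0
    rw [sigma_w n w i] at h0
    conv_lhs at h0 => rw [w_decomp n w j]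
    simp only [omega_add_left, omega_add_right, omega_smul_left, omega_smul_right] at h0
    linear_combination h0 + (omegaC n (Yr n w i) (Xr n w j) - omegaC n (Xr n w i) (Yr n w j)
      + Complex.I * omegaC n (Yr n w i) (Yr n w j)) * Complex.I_mul_I
  exact complex_solve _ _ _ _ _ hA hB hC2 hD hδ e1 e2

end rel

/-! ### The standard positive Lagrangian -/

noncomputable def stdVec (n : ℕ) (k : Fin n) : Vc n :=
  (((Real.sqrt 2 : ℝ) : ℂ))⁻¹ •
    ((Pi.single (Sum.inr k) (1:ℂ) : Vc n) + Complex.I • (Pi.single (Sum.inl k) (1:ℂ) : Vc n))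

noncomputable def stdLag (n : ℕ) : Submodule ℂ (Vc n) :=
  Submodule.span ℂ (Set.range (stdVec n))

lemma sqrt2_ne_zero : ((Real.sqrt 2 : ℝ) : ℂ) ≠ 0 := by
  simp only [ne_eq, Complex.ofReal_eq_zero]
  positivity

lemma sqrt2_mul_self : ((Real.sqrt 2 : ℝ) : ℂ) * ((Real.sqrt 2 : ℝ) : ℂ) = 2 := by
  rw [← Complex.ofReal_mul, Real.mul_self_sqrt (by norm_num : (2:ℝ) ≥ 0)]
  norm_num

/-! ### The matrix attached to an orthonormal basis of a positive Lagrangian -/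

noncomputable def gMat (n : ℕ) (w : Fin n → Vc n) :
    Matrix (Fin n ⊕ Fin n) (Fin n ⊕ Fin n) ℝ :=
  Matrix.of fun a b =>
    match b with
    | Sum.inl k => Real.sqrt 2 * (w k a).im
    | Sum.inr k => Real.sqrt 2 * (w k a).re

lemma gMat_col_inl (n : ℕ) (w : Fin n → Vc n) (k : Fin n) :
    (fun c => ((gMat n w).map (algebraMap ℝ ℂ)) c (Sum.inl k))
      = ((Real.sqrt 2 : ℝ) : ℂ) • Yr n w k := by
  funext c
  simp [gMat, Matrix.map_apply, Yr, Complex.ofReal_mul]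

lemma gMat_col_inr (n : ℕ) (w : Fin n → Vc n) (k : Fin n) :
    (fun c => ((gMat n w).map (algebraMap ℝ ℂ)) c (Sum.inr k))
      = ((Real.sqrt 2 : ℝ) : ℂ) • Xr n w k := by
  funext c
  simp [gMat, Matrix.map_apply, Xr, Complex.ofReal_mul]

lemma gMat_sympl (n : ℕ) (w : Fin n → Vc n)
    (hIso : ∀ i j, omegaC n (w i) (w j) = 0)
    (hOrth : ∀ i j, hC n (w i) (w j) = if i = j then 1 else 0) :
    ((gMat n w).map (algebraMap ℝ ℂ))ᵀ * Jc n * ((gMat n w).map (algebraMap ℝ ℂ)) = Jc n := by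
  ext a b
  rw [entry_eq_omega]
  cases a with
  | inl j =>
    cases b with
    | inl k =>
      rw [gMat_col_inl, gMat_col_inl, omega_smul_left, omega_smul_right,
        (key_relations n w hIso hOrth j k).2.1]
      simp [Jc]
    | inr k =>
      rw [gMat_col_inl, gMat_col_inr, omega_smul_left, omega_smul_right,
        (key_relations n w hIso hOrth j k).2.2.2]
      rw [← mul_assoc, sqrt2_mul_self]
      simp [Jc]
      ring
  | inr j =>
    cases b with
    | inl k =>
      rw [gMat_col_inr, gMat_col_inl, omega_smul_left, omega_smul_right,
        (key_relations n w hIso hOrth j k).2.2.1]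
      rw [← mul_assoc, sqrt2_mul_self]
      simp only [Jc, Matrix.of_apply]
      split <;> norm_num
    | inr k =>
      rw [gMat_col_inr, gMat_col_inr, omega_smul_left, omega_smul_right,
        (key_relations n w hIso hOrth j k).1]
      simp [Jc]

lemma matAct_single (n : ℕ) (g : Matrix (Fin n ⊕ Fin n) (Fin n ⊕ Fin n) ℝ)
    (a : Fin n ⊕ Fin n) :
    matAct n g (Pi.single a 1) = fun c => (g.map (algebraMap ℝ ℂ)) c a := by
  unfold matAct
  rw [Matrix.mulVecLin_apply, Matrix.mulVec_single]
  funext c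
  simp

lemma gMat_stdVec (n : ℕ) (w : Fin n → Vc n) (k : Fin n) :
    matAct n (gMat n w) (stdVec n k) = w k := by
  unfold stdVec
  rw [_root_.map_smul, _root_.map_add, _root_.map_smul, matAct_single, matAct_single]
  rw [gMat_col_inr n w k, gMat_col_inl n w k]
  rw [smul_comm Complex.I]
  rw [← smul_add, ← smul_assoc]
  rw [smul_eq_mul, inv_mul_cancel₀ sqrt2_ne_zero, one_smul]
  exact (w_decomp n w k).symm

lemma exists_g_map_std (n : ℕ) (W : Submodule ℂ (Vc n))
    (hWdim : Module.finrank ℂ W = n)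
    (hWiso : ∀ v ∈ W, ∀ w ∈ W, omegaC n v w = 0)
    (hWpos : ∀ v ∈ W, v ≠ 0 → 0 < (hC n v v).re ∧ (hC n v v).im = 0) :
    ∃ g : Matrix (Fin n ⊕ Fin n) (Fin n ⊕ Fin n) ℝ,
      ((g.map (algebraMap ℝ ℂ))ᵀ * Jc n * (g.map (algebraMap ℝ ℂ)) = Jc n) ∧
      Submodule.map (matAct n g) (stdLag n) = W := by
  obtain ⟨w, hmem, hOrth, hspan⟩ := exists_orthonormal_basis n W hWdim hWpos
  have hIso : ∀ i j, omegaC n (w i) (w j) = 0 := fun i j => hWiso _ (hmem i) _ (hmem j)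
  refine ⟨gMat n w, gMat_sympl n w hIso hOrth, ?_⟩
  rw [stdLag, Submodule.map_span, ← Set.range_comp]
  rw [show (⇑(matAct n (gMat n w)) ∘ stdVec n) = w from funext fun k => gMat_stdVec n w k]
  exact hspan

/-! ### Main theorem -/

theorem sp_transitive_on_positive_lagrangians (n : ℕ) (hn : 1 ≤ n)
    (W W' : Submodule ℂ (Vc n))
    (hWdim : Module.finrank ℂ W = n) (hW'dim : Module.finrank ℂ W' = n)
    (hWiso : ∀ v ∈ W, ∀ w ∈ W, omegaC n v w = 0)
    (hW'iso : ∀ v ∈ W', ∀ w ∈ W', omegaC n v w = 0)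
    (hWpos : ∀ v ∈ W, v ≠ 0 → 0 < (hC n v v).re ∧ (hC n v v).im = 0)
    (hW'pos : ∀ v ∈ W', v ≠ 0 → 0 < (hC n v v).re ∧ (hC n v v).im = 0) :
    ∃ g : Matrix (Fin n ⊕ Fin n) (Fin n ⊕ Fin n) ℝ,
      (∀ v w : Vc n, omegaC n (matAct n g v) (matAct n g w) = omegaC n v w) ∧
      Submodule.map (matAct n g) W = W' := by
  obtain ⟨g1, hg1s, hg1m⟩ := exists_g_map_std n W hWdim hWiso hWpos
  obtain ⟨g2, hg2s, hg2m⟩ := exists_g_map_std n W' hW'dim hW'iso hW'pos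
  -- the real inverse of g1
  set ginv : Matrix (Fin n ⊕ Fin n) (Fin n ⊕ Fin n) ℝ := (-(Jr n)) * g1ᵀ * Jr n with hginv
  set M1 : Matrix (Fin n ⊕ Fin n) (Fin n ⊕ Fin n) ℂ := g1.map (algebraMap ℝ ℂ) with hM1
  set M2 : Matrix (Fin n ⊕ Fin n) (Fin n ⊕ Fin n) ℂ := g2.map (algebraMap ℝ ℂ) with hM2
  have hmapinv : ginv.map (algebraMap ℝ ℂ) = (-(Jc n)) * M1ᵀ * Jc n := by
    rw [hginv, Matrix.map_mul (f := algebraMap ℝ ℂ), Matrix.map_mul (f := algebraMap ℝ ℂ),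
      Matrix.transpose_map, ← Jr_map n, hM1]
    congr 1
    congr 1
    ext a b
    simp
  have hNM : ginv.map (algebraMap ℝ ℂ) * M1 = 1 := by
    rw [hmapinv]; exact leftinv n M1 hg1s
  have hMN : M1 * ginv.map (algebraMap ℝ ℂ) = 1 := mul_eq_one_comm.mp hNM
  set N : Matrix (Fin n ⊕ Fin n) (Fin n ⊕ Fin n) ℂ := ginv.map (algebraMap ℝ ℂ) with hN
  have hginvs : Nᵀ * Jc n * N = Jc n := by
    calc Nᵀ * Jc n * N = Nᵀ * (M1ᵀ * Jc n * M1) * N := by rw [hg1s]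
      _ = (M1 * N)ᵀ * Jc n * (M1 * N) := by
          rw [Matrix.transpose_mul]
          noncomm_ring
      _ = Jc n := by rw [hMN]; simp
  have hGs : ((g2 * ginv).map (algebraMap ℝ ℂ))ᵀ * Jc n * ((g2 * ginv).map (algebraMap ℝ ℂ))
      = Jc n := by
    rw [Matrix.map_mul (f := algebraMap ℝ ℂ), ← hM2, ← hN]
    calc (M2 * N)ᵀ * Jc n * (M2 * N) = Nᵀ * (M2ᵀ * Jc n * M2) * N := by
          rw [Matrix.transpose_mul]
          noncomm_ring
      _ = Jc n := by rw [hg2s]; exact hginvs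
  refine ⟨g2 * ginv, ?_, ?_⟩
  · intro v w
    have : ∀ u : Vc n, matAct n (g2 * ginv) u = ((g2 * ginv).map (algebraMap ℝ ℂ)).mulVec u :=
      fun u => rfl
    rw [this, this]
    exact sympl_of_mat n _ hGs v w
  · have hcomp : matAct n (g2 * ginv) = (matAct n g2) ∘ₗ (matAct n ginv) := by
      unfold matAct
      rw [Matrix.map_mul (f := algebraMap ℝ ℂ), Matrix.mulVecLin_mul]
    rw [hcomp, Submodule.map_comp]
    have hinvW : Submodule.map (matAct n ginv) W = stdLag n := by
      rw [← hg1m, ← Submodule.map_comp]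
      have hid : (matAct n ginv) ∘ₗ (matAct n g1) = LinearMap.id := by
        unfold matAct
        rw [← Matrix.mulVecLin_mul, ← hM1, ← hN, hNM, Matrix.mulVecLin_one]
      rw [hid, Submodule.map_id]
    rw [hinvW, hg2m]
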